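/- Let X = ∏_{n=1}^κ X_n and Z = ∏_{m=1}^μ Z_m be finite products of nonempty finite sets, and let components g̃_{mn} : Z_m × Z_n → ℝ (with g̃_{mm}=0), g̃_m : Z_m → ℝ, g̃_{μ+n,m} : X_n × Z_m → ℝ satisfy: Σ_{z_m ∈ Z_m} g̃_m(z_m) = 0 for all m; Σ_{z_m ∈ Z_m} g̃_{mn}(z_m, z_n) = 0 for all m ≠ n and every fixed z_n; and Σ_{z_m ∈ Z_m} g̃_{μ+n,m}(x_n, z_m) = 0 for every fixed x_n. Let F, G, h and γ(u,v) = (1/2) vᵀFv + hᵀv + uᵀGv be built from these components as in the indicator encoding. Then for every x ∈ X and z ∈ Z, γ(u(x), v°(z)) = γ(u(x), v(z)), where v(z) is the 0/1 indicator encoding and v°(z) the shifted indicator encoding; i.e. the minimized criterion does not depend on the average value of any subvector. -/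

import Mathlib

open Matrix

/-- If the HDMR components satisfy the zero-mean / zero-marginal
conditions (and, as for HDMR components of a single function, the second-order
components are symmetric with zero diagonal), then the quadratic criterion
`γ(u,v) = (1/2) vᵀFv + hᵀv + uᵀGv` takes the same value on the 0/1 indicator
encoding `v(z)` and on the shifted indicator encoding `v°(z)`: the criterion does
not depend on the average value of any subvector. -/
theorem criterion_invariant_under_shift
    (κ μ : ℕ) (X : Fin κ → Type) (Z : Fin μ → Type)
    [∀ n, Fintype (X n)] [∀ n, Nonempty (X n)] [∀ n, DecidableEq (X n)]
    [∀ m, Fintype (Z m)] [∀ m, Nonempty (Z m)] [∀ m, DecidableEq (Z m)]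
    (gZZ : ∀ m n : Fin μ, Z m → Z n → ℝ)
    (gZ : ∀ m : Fin μ, Z m → ℝ)
    (gXZ : ∀ (n : Fin κ) (m : Fin μ), X n → Z m → ℝ)
    (hdiag : ∀ (m : Fin μ) (a b : Z m), gZZ m m a b = 0)
    (hsymm : ∀ (m n : Fin μ) (a : Z m) (b : Z n), gZZ m n a b = gZZ n m b a)
    (hzero1 : ∀ m : Fin μ, ∑ zm : Z m, gZ m zm = 0)
    (hzero2 : ∀ (m n : Fin μ), m ≠ n → ∀ zn : Z n, ∑ zm : Z m, gZZ m n zm zn = 0)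
    (hzeroXZ : ∀ (n : Fin κ) (m : Fin μ) (xn : X n), ∑ zm : Z m, gXZ n m xn zm = 0)
    (F : Matrix ((m : Fin μ) × Z m) ((m : Fin μ) × Z m) ℝ)
    (hF : ∀ p q : (m : Fin μ) × Z m, F p q = gZZ p.1 q.1 p.2 q.2)
    (G : Matrix ((n : Fin κ) × X n) ((m : Fin μ) × Z m) ℝ)
    (hG : ∀ (p : (n : Fin κ) × X n) (q : (m : Fin μ) × Z m), G p q = gXZ p.1 q.1 p.2 q.2)
    (h : ((m : Fin μ) × Z m) → ℝ)
    (hh : ∀ p : (m : Fin μ) × Z m, h p = gZ p.1 p.2)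
    (v : (∀ m, Z m) → ((m : Fin μ) × Z m) → ℝ)
    (hv : ∀ (z : ∀ m, Z m) (p : (m : Fin μ) × Z m),
      v z p = if p.2 = z p.1 then (1 : ℝ) else 0)
    (v' : (∀ m, Z m) → ((m : Fin μ) × Z m) → ℝ)
    (hv' : ∀ (z : ∀ m, Z m) (p : (m : Fin μ) × Z m),
      v' z p = (if p.2 = z p.1 then (1 : ℝ) else 0) - 1 / (Fintype.card (Z p.1) : ℝ))
    (u : (∀ n, X n) → ((n : Fin κ) × X n) → ℝ)
    (hu : ∀ (x : ∀ n, X n) (p : (n : Fin κ) × X n),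
      u x p = if p.2 = x p.1 then (1 : ℝ) else 0) :
    ∀ (x : ∀ n, X n) (z : ∀ m, Z m),
      (1 / 2) * (v' z ⬝ᵥ F.mulVec (v' z)) + h ⬝ᵥ v' z + u x ⬝ᵥ G.mulVec (v' z) =
      (1 / 2) * (v z ⬝ᵥ F.mulVec (v z)) + h ⬝ᵥ v z + u x ⬝ᵥ G.mulVec (v z) := by
  intro x z
  set c : ((m : Fin μ) × Z m) → ℝ := fun p => 1 / (Fintype.card (Z p.1) : ℝ) with hc
  have hvv : v' z = v z - c := by
    funext p
    simp [hv' z p, hv z p, hc, sub_eq_add_neg]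
  -- F applied to c is zero
  have hFc : F.mulVec c = 0 := by
    funext p
    simp only [mulVec, dotProduct, Pi.zero_apply]
    rw [← Finset.univ_sigma_univ, Finset.sum_sigma]
    have : ∀ n : Fin μ, ∑ b : Z n, F p ⟨n, b⟩ * c ⟨n, b⟩ = 0 := by
      intro n
      rcases eq_or_ne p.1 n with rfl | hne
      · simp [hF, hdiag]
      · have : ∑ b : Z n, gZZ p.1 n p.2 b = 0 := by
          have := hzero2 n p.1 hne.symm p.2
          calc ∑ b : Z n, gZZ p.1 n p.2 b = ∑ b : Z n, gZZ n p.1 b p.2 := by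
                refine Finset.sum_congr rfl fun b _ => hsymm p.1 n p.2 b
            _ = 0 := this
        simp only [hF, hc]
        rw [← Finset.sum_mul _ _ (1 / (Fintype.card (Z n) : ℝ)), this, zero_mul]
    simp [this]
  -- c times F is zero
  have hcF : ∀ w, c ⬝ᵥ F.mulVec w = 0 := by
    intro w
    rw [dotProduct_mulVec]
    have hcF0 : vecMul c F = 0 := by
      funext q
      simp only [vecMul, dotProduct, Pi.zero_apply]
      rw [← Finset.univ_sigma_univ, Finset.sum_sigma]
      have : ∀ m : Fin μ, ∑ a : Z m, c ⟨m, a⟩ * F ⟨m, a⟩ q = 0 := by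
        intro m
        rcases eq_or_ne m q.1 with rfl | hne
        · simp [hF, hdiag]
        · simp only [hF, hc]
          rw [← Finset.mul_sum _ _ (1 / (Fintype.card (Z m) : ℝ)), hzero2 m q.1 hne q.2, mul_zero]
      simp [this]
    rw [hcF0, zero_dotProduct]
  have hhc : h ⬝ᵥ c = 0 := by
    simp only [dotProduct]
    rw [← Finset.univ_sigma_univ, Finset.sum_sigma]
    have : ∀ m : Fin μ, ∑ a : Z m, h ⟨m, a⟩ * c ⟨m, a⟩ = 0 := by
      intro m
      simp only [hh, hc]
      rw [← Finset.sum_mul _ _ (1 / (Fintype.card (Z m) : ℝ)), hzero1 m, zero_mul]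
    simp [this]
  have hGc : G.mulVec c = 0 := by
    funext p
    simp only [mulVec, dotProduct, Pi.zero_apply]
    rw [← Finset.univ_sigma_univ, Finset.sum_sigma]
    have : ∀ m : Fin μ, ∑ b : Z m, G p ⟨m, b⟩ * c ⟨m, b⟩ = 0 := by
      intro m
      simp only [hG, hc]
      rw [← Finset.sum_mul _ _ (1 / (Fintype.card (Z m) : ℝ)), hzeroXZ p.1 m p.2, zero_mul]
    simp [this]
  rw [hvv]
  rw [mulVec_sub, sub_dotProduct, dotProduct_sub, dotProduct_sub, dotProduct_sub,
    mulVec_sub, dotProduct_sub]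
  rw [hFc, hGc]
  simp only [dotProduct_zero, hhc, hcF (v z)]
  ring
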